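/- Worst-case counting refinement: suppose c1 has position 1 on all issues, c2 has position 0 on all issues, and for every issue at most h voters have position 1 on it. Then for any nonempty set S of k issues, the number of voters who have position 1 on strictly more than k/2 issues of S (i.e., on at least ⌊k/2⌋+1 issues) is at most 2h. Hence Best-Single-Issue is a 1/2-approximation for two-candidate binary Max Support under worst-case tie-breaking. -/
import Mathlib


/-- worst-case counting refinement. If on every issue at most
h voters hold position 1, then for any nonempty issue set S, the number of
voters who hold position 1 on strictly more than half the issues of S is at
most 2h. -/
theorem binary_max_support_counting_strict
    (ℓ n h : ℕ) (v : Fin n → Fin ℓ → Bool)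
    (hh : ∀ k : Fin ℓ, (Finset.univ.filter (fun j : Fin n => v j k = true)).card ≤ h) :
    ∀ S : Finset (Fin ℓ), S.Nonempty →
      (Finset.univ.filter (fun j : Fin n =>
          S.card < 2 * (S.filter (fun k => v j k = true)).card)).card ≤ 2 * h := by
  intro S hS
  set T := Finset.univ.filter (fun j : Fin n =>
      S.card < 2 * (S.filter (fun k => v j k = true)).card) with hT
  -- total ones over S
  have htotal : ∑ j : Fin n, (S.filter (fun k => v j k = true)).card ≤ S.card * h := by
    have : ∑ j : Fin n, (S.filter (fun k => v j k = true)).card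
        = ∑ k ∈ S, (Finset.univ.filter (fun j : Fin n => v j k = true)).card := by
      simp only [Finset.card_filter]
      rw [Finset.sum_comm]
    rw [this]
    calc ∑ k ∈ S, (Finset.univ.filter (fun j : Fin n => v j k = true)).card
        ≤ ∑ _k ∈ S, h := Finset.sum_le_sum (fun k _ => hh k)
      _ = S.card * h := by simp [mul_comm]
  have hlow : T.card * (S.card + 1) ≤ 2 * ∑ j ∈ T, (S.filter (fun k => v j k = true)).card := by
    rw [Finset.mul_sum]
    calc T.card * (S.card + 1) = ∑ _j ∈ T, (S.card + 1) := by
          rw [Finset.sum_const, smul_eq_mul]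
      _ ≤ _ := Finset.sum_le_sum (fun j hj => by
          have := (Finset.mem_filter.mp hj).2
          omega)
  have hsub : ∑ j ∈ T, (S.filter (fun k => v j k = true)).card
      ≤ ∑ j : Fin n, (S.filter (fun k => v j k = true)).card :=
    Finset.sum_le_sum_of_subset (Finset.filter_subset _ _)
  have hk : 1 ≤ S.card := Finset.Nonempty.card_pos hS
  have : T.card * (S.card + 1) ≤ (2 * h) * (S.card + 1) := by
    calc T.card * (S.card + 1) ≤ 2 * (S.card * h) := by
          calc T.card * (S.card + 1) ≤ 2 * ∑ j ∈ T, (S.filter (fun k => v j k = true)).card := hlow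
            _ ≤ 2 * ∑ j : Fin n, (S.filter (fun k => v j k = true)).card := by omega
            _ ≤ 2 * (S.card * h) := by omega
      _ ≤ (2 * h) * (S.card + 1) := by nlinarith
  exact Nat.le_of_mul_le_mul_right this (by omega)
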